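/- In the two-seller sequential-search demand system, total demand adds up independently of the search order: D_i¹ + D_j² = 1 − F(p_i)·F(p_j) and D_j¹ + D_i² = 1 − F(p_i)·F(p_j). -/

import Mathlib

open MeasureTheory

/-- The CDF associated to density `f` supported on `[0,1]`. -/
noncomputable def cdf (f : ℝ → ℝ) (x : ℝ) : ℝ := ∫ u in (0:ℝ)..x, f u

lemma cdf_hasDerivAt {f : ℝ → ℝ} (hf : Continuous f) (x : ℝ) :
    HasDerivAt (cdf f) (f x) x :=
  intervalIntegral.integral_hasDerivAt_right (hf.intervalIntegrable _ _)
    (hf.stronglyMeasurableAtFilter _ _) hf.continuousAt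

lemma cdf_continuous {f : ℝ → ℝ} (hf : Continuous f) : Continuous (cdf f) :=
  continuous_iff_continuousAt.2 fun x => (cdf_hasDerivAt hf x).continuousAt

lemma cdf_integral_pair {f : ℝ → ℝ} (hf : Continuous f) (Δ a b : ℝ) :
    (∫ u in a..b, cdf f u * f (u + Δ)) + (∫ u in a..b, cdf f (u + Δ) * f u)
      = cdf f b * cdf f (b + Δ) - cdf f a * cdf f (a + Δ) := by
  have hFc := cdf_continuous hf
  have hcont : Continuous (fun u => cdf f u * f (u + Δ) + cdf f (u + Δ) * f u) := by
    fun_prop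
  have h1 : IntervalIntegrable (fun u => cdf f u * f (u + Δ)) volume a b := by
    apply Continuous.intervalIntegrable; fun_prop
  have h2 : IntervalIntegrable (fun u => cdf f (u + Δ) * f u) volume a b := by
    apply Continuous.intervalIntegrable; fun_prop
  rw [← intervalIntegral.integral_add h1 h2]
  have hG : ∀ x ∈ Set.uIcc a b,
      HasDerivAt (fun u => cdf f u * cdf f (u + Δ))
        (cdf f x * f (x + Δ) + cdf f (x + Δ) * f x) x := by
    intro x _
    have hx1 : HasDerivAt (fun u : ℝ => cdf f (u + Δ)) (f (x + Δ)) x := by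
      have := (cdf_hasDerivAt hf (x + Δ)).comp x ((hasDerivAt_id x).add_const Δ)
      exact this.congr_deriv (by ring)
    have := (cdf_hasDerivAt hf x).mul hx1
    exact this.congr_deriv (by ring)
  rw [intervalIntegral.integral_eq_sub_of_hasDerivAt hG (hcont.intervalIntegrable a b)]

/-- Total demand adds up independently of the search order:
`D_i¹ + D_j² = 1 - F(p_i)·F(p_j)` and `D_j¹ + D_i² = 1 - F(p_i)·F(p_j)`. -/
theorem total_demand_adds_up
    (f : ℝ → ℝ) (hf_cont : Continuous f) (hf_nonneg : ∀ x, 0 ≤ f x)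
    (hf_supp : ∀ x, x < 0 ∨ 1 < x → f x = 0)
    (hf_total : (∫ u in (0:ℝ)..1, f u) = 1)
    (A pi pj : ℝ) (hpi : 0 ≤ pi) (hpj : 0 ≤ pj)
    (hpiA : pi ≤ A) (hpjA : pj ≤ A) (hA1 : A ≤ 1)
    (hgap : |pi - pj| ≤ 1 - A) :
    -- D_i¹ + D_j² = 1 - F(p_i) F(p_j)
    ((1 - cdf f (A + (pi - pj)) + ∫ u in pj..A, cdf f u * f (u + (pi - pj)))
        + ((1 - cdf f A) * cdf f (A + (pi - pj))
            + ∫ u in pj..A, cdf f (u + (pi - pj)) * f u))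
        = 1 - cdf f pi * cdf f pj
      ∧
    -- D_j¹ + D_i² = 1 - F(p_i) F(p_j)
    ((1 - cdf f (A - (pi - pj)) + ∫ u in pi..A, cdf f u * f (u - (pi - pj)))
        + ((1 - cdf f A) * cdf f (A - (pi - pj))
            + ∫ u in pj..(A - (pi - pj)), cdf f u * f (u + (pi - pj))))
        = 1 - cdf f pi * cdf f pj := by
  have hpji : pj + (pi - pj) = pi := by ring
  constructor
  · have h1 := cdf_integral_pair hf_cont (pi - pj) pj A
    rw [hpji] at h1
    linear_combination h1
  · have hsub : (∫ u in pi..A, cdf f u * f (u - (pi - pj)))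
        = ∫ u in pj..(A - (pi - pj)), cdf f (u + (pi - pj)) * f u := by
      have := intervalIntegral.integral_comp_sub_right (a := pi) (b := A)
        (fun w => cdf f (w + (pi - pj)) * f w) (pi - pj)
      simp only [sub_add_cancel] at this
      rw [this, show pi - (pi - pj) = pj by ring]
    have h1 := cdf_integral_pair hf_cont (pi - pj) pj (A - (pi - pj))
    rw [hpji, show A - (pi - pj) + (pi - pj) = A by ring] at h1
    rw [hsub]
    linear_combination h1
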